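/- Let n ≥ 3 be an integer. Then 2·S(a) = 2·cosh(a) · ∫_1^∞ (t^{2n−2} − 1)^{−1/2} · (cosh²(a)·t² − 1)^{−1/2} dt tends to π/(n−1) as a → +∞ (equivalently, the height 2·S of the translation-invariant minimal hypersurface M_d tends to π/(n−1) as d = cosh^{n−1}(a) → +∞). -/

import Mathlib

set_option maxHeartbeats 1000000

open Real Filter MeasureTheory Set Topology

/-- `S n a = cosh(a) · ∫_1^∞ (t^{2n−2} − 1)^{-1/2} (cosh²(a)·t² − 1)^{-1/2} dt`. -/
noncomputable def S (n : ℕ) (a : ℝ) : ℝ :=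
  Real.cosh a *
    ∫ t in Set.Ioi (1 : ℝ),
      (t ^ (2 * n - 2) - 1) ^ (-(1 : ℝ) / 2) *
        (Real.cosh a ^ 2 * t ^ 2 - 1) ^ (-(1 : ℝ) / 2)

private lemma tendsto_sqrt_atTop' : Tendsto Real.sqrt atTop atTop := by
  apply tendsto_atTop_atTop.mpr
  intro b
  refine ⟨(max b 0)^2, fun x hx => ?_⟩
  calc b ≤ max b 0 := le_max_left _ _
    _ = Real.sqrt ((max b 0)^2) := (Real.sqrt_sq (le_max_right _ _)).symm
    _ ≤ Real.sqrt x := Real.sqrt_le_sqrt hx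

private lemma tendsto_cosh_atTop' : Tendsto Real.cosh atTop atTop := by
  apply tendsto_atTop_mono (fun a => ?_) (tendsto_exp_atTop.atTop_div_const two_pos)
  rw [Real.cosh_eq]
  have := Real.exp_pos (-a)
  linarith

private lemma rpow_neg_half_eq (x : ℝ) (hx : 0 ≤ x) :
    x ^ (-(1:ℝ)/2) = (Real.sqrt x)⁻¹ := by
  rw [show (-(1:ℝ)/2) = -(1/2) by norm_num, Real.rpow_neg hx, ← Real.sqrt_eq_rpow]

/-- the key algebraic identity: `h·(h²t²−1)^{-1/2} = (t²−h⁻²)^{-1/2}` for `h ≥ 1`, `t > 1`. -/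
private lemma key_identity (h t : ℝ) (hh : 1 ≤ h) (ht : 1 < t) :
    h * (h ^ 2 * t ^ 2 - 1) ^ (-(1:ℝ)/2) = (t ^ 2 - (h⁻¹) ^ 2) ^ (-(1:ℝ)/2) := by
  have h0 : 0 < h := lt_of_lt_of_le one_pos hh
  have ht0 : 0 < t := lt_trans one_pos ht
  have heq : h ^ 2 * t ^ 2 - 1 = h ^ 2 * (t ^ 2 - (h⁻¹) ^ 2) := by
    field_simp
  rw [heq, Real.mul_rpow (sq_nonneg h) ?hpos.le]
  case hpos =>
    have h1 : (h⁻¹) ^ 2 ≤ 1 := by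
      have : h⁻¹ ≤ 1 := by
        rw [inv_le_one_iff₀]; right; exact hh
      have h2 : 0 < h⁻¹ := inv_pos.mpr h0
      nlinarith
    nlinarith
  have : (h ^ 2 : ℝ) ^ (-(1:ℝ)/2) = h⁻¹ := by
    rw [rpow_neg_half_eq _ (sq_nonneg h), Real.sqrt_sq h0.le]
  rw [this]
  field_simp

/-- the limit integrand. -/
private noncomputable def fLim (n : ℕ) (t : ℝ) : ℝ :=
  (t ^ (2 * n - 2) - 1) ^ (-(1 : ℝ) / 2) * (t ^ 2) ^ (-(1 : ℝ) / 2)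

/-- the antiderivative. -/
private noncomputable def antider (n : ℕ) (t : ℝ) : ℝ :=
  Real.arctan (Real.sqrt (t ^ (2 * n - 2) - 1)) / ((n : ℝ) - 1)

private lemma n_facts (n : ℕ) (hn : 3 ≤ n) :
    (0 : ℝ) < (n : ℝ) - 1 ∧ 2 * n - 2 ≠ 0 ∧ ((2 * n - 2 : ℕ) : ℝ) = 2 * ((n : ℝ) - 1) := by
  have h3 : (3 : ℝ) ≤ (n : ℝ) := by exact_mod_cast hn
  refine ⟨by linarith, by omega, ?_⟩
  have h2 : 2 ≤ 2 * n := by omega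
  push_cast [Nat.cast_sub h2]
  ring

private lemma antider_hasDeriv (n : ℕ) (hn : 3 ≤ n) {t : ℝ} (ht : t ∈ Ioi (1:ℝ)) :
    HasDerivAt (antider n) (fLim n t) t := by
  obtain ⟨hn1, hm0, hmcast⟩ := n_facts n hn
  simp only [mem_Ioi] at ht
  have ht0 : 0 < t := lt_trans one_pos ht
  set m := 2 * n - 2 with hm
  have hum : 1 < t ^ m := one_lt_pow₀ ht hm0
  have hu0 : 0 < t ^ m - 1 := by linarith
  have hu : HasDerivAt (fun y : ℝ => y ^ m - 1) ((m : ℝ) * t ^ (m - 1)) t :=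
    (hasDerivAt_pow m t).sub_const 1
  have hs : HasDerivAt (fun y : ℝ => Real.sqrt (y ^ m - 1))
      ((m : ℝ) * t ^ (m - 1) / (2 * Real.sqrt (t ^ m - 1))) t := hu.sqrt hu0.ne'
  have ha := (hs.arctan).div_const ((n : ℝ) - 1)
  refine ha.congr_deriv ?_; symm
  have hsq : Real.sqrt (t ^ m - 1) ^ 2 = t ^ m - 1 := Real.sq_sqrt hu0.le
  have hs0 : 0 < Real.sqrt (t ^ m - 1) := Real.sqrt_pos.mpr hu0
  rw [hsq]
  have h1m : 1 + (t ^ m - 1) = t ^ m := by ring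
  rw [h1m]
  have htm : t ^ m = t ^ (m - 1) * t := by
    conv_lhs => rw [show m = (m - 1) + 1 by omega]
    rw [pow_succ]
  unfold fLim
  rw [← hm, rpow_neg_half_eq _ hu0.le, rpow_neg_half_eq _ (sq_nonneg t), Real.sqrt_sq ht0.le,
    hmcast, htm]
  have h1 : t ^ (m - 1) ≠ 0 := pow_ne_zero _ ht0.ne'
  have hne : ((n:ℝ) - 1) ≠ 0 := ne_of_gt hn1
  have hs0' : Real.sqrt (t ^ (m-1) * t - 1) ≠ 0 := by
    rw [← htm]; exact hs0.ne'
  field_simp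

private lemma fLim_nonneg (n : ℕ) (hn : 3 ≤ n) (t : ℝ) (ht : t ∈ Ioi (1:ℝ)) : 0 ≤ fLim n t :=
  mul_nonneg (Real.rpow_nonneg (by
    simp only [mem_Ioi] at ht
    nlinarith [one_lt_pow₀ ht (show 2*n-2 ≠ 0 by omega), sq_nonneg t] ) _)
    (Real.rpow_nonneg (sq_nonneg t) _)

private lemma antider_tendsto (n : ℕ) (hn : 3 ≤ n) :
    Tendsto (antider n) atTop (𝓝 (π / 2 / ((n : ℝ) - 1))) := by
  obtain ⟨hn1, hm0, _⟩ := n_facts n hn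
  have h1 : Tendsto (fun t : ℝ => t ^ (2 * n - 2) - 1) atTop atTop := by
    simpa [sub_eq_add_neg] using
      tendsto_atTop_add_const_right atTop (-1 : ℝ) (tendsto_pow_atTop hm0)
  have h2 := tendsto_sqrt_atTop'.comp h1
  have h3 := (Real.tendsto_arctan_atTop.mono_right nhdsWithin_le_nhds).comp h2
  exact h3.div_const _

private lemma integral_fLim (n : ℕ) (hn : 3 ≤ n) :
    ∫ t in Ioi (1:ℝ), fLim n t = π / 2 / ((n : ℝ) - 1) := by
  obtain ⟨hn1, hm0, _⟩ := n_facts n hn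
  have hcont : ContinuousWithinAt (antider n) (Ici (1:ℝ)) 1 := by
    apply Continuous.continuousWithinAt
    exact (Real.continuous_arctan.comp (Real.continuous_sqrt.comp
      ((continuous_pow _).sub continuous_const))).div_const _
  have := integral_Ioi_of_hasDerivAt_of_nonneg hcont (fun x hx => antider_hasDeriv n hn hx)
    (fun x hx => fLim_nonneg n hn x hx) (antider_tendsto n hn)
  rw [this]
  simp [antider]

private lemma integrable_fLim (n : ℕ) (hn : 3 ≤ n) : IntegrableOn (fLim n) (Ioi (1:ℝ)) := by
  have hcont : ContinuousWithinAt (antider n) (Ici (1:ℝ)) 1 := by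
    apply Continuous.continuousWithinAt
    exact (Real.continuous_arctan.comp (Real.continuous_sqrt.comp
      ((continuous_pow _).sub continuous_const))).div_const _
  exact integrableOn_Ioi_deriv_of_nonneg hcont (fun x hx => antider_hasDeriv n hn hx)
    (fun x hx => fLim_nonneg n hn x hx) (antider_tendsto n hn)

/-- For `n ≥ 3`, the height `2·S(a)` tends to `π/(n−1)` as `a → +∞`
(i.e. as `d = cosh^{n−1}(a) → +∞`). -/
theorem two_S_tendsto_pi_div (n : ℕ) (hn : 3 ≤ n) :
    Filter.Tendsto (fun a : ℝ => 2 * S n a) Filter.atTop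
      (nhds (Real.pi / ((n : ℝ) - 1))) := by
  obtain ⟨hn1, hm0, _⟩ := n_facts n hn
  set m := 2 * n - 2 with hm
  set K : ℝ := ((1 : ℝ) - (Real.cosh 1)⁻¹ ^ 2) ^ (-(1:ℝ)/2) with hK
  have hc1 : (1:ℝ) < Real.cosh 1 := by
    have := Real.one_lt_cosh.mpr (by norm_num : (1:ℝ) ≠ 0)
    exact this
  have hc1' : (Real.cosh 1)⁻¹ < 1 := inv_lt_one_of_one_lt₀ hc1
  have hc1'' : 0 < (Real.cosh 1)⁻¹ := inv_pos.mpr (by linarith)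
  have hKbase : 0 < 1 - (Real.cosh 1)⁻¹ ^ 2 := by nlinarith
  have hK0 : 0 ≤ K := Real.rpow_nonneg hKbase.le _
  -- the integrand with cosh pulled inside
  set F : ℝ → ℝ → ℝ := fun a t => Real.cosh a *
      ((t ^ m - 1) ^ (-(1 : ℝ) / 2) * (Real.cosh a ^ 2 * t ^ 2 - 1) ^ (-(1 : ℝ) / 2)) with hF
  have hSa : ∀ a, S n a = ∫ t in Ioi (1:ℝ), F a t := by
    intro a
    rw [S, ← integral_const_mul]
  -- dominated convergence
  have hDCT : Tendsto (fun a => ∫ t in Ioi (1:ℝ), F a t) atTop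
      (𝓝 (∫ t in Ioi (1:ℝ), fLim n t)) := by
    apply tendsto_integral_filter_of_dominated_convergence (fun t => K * fLim n t)
    · filter_upwards with a
      apply Measurable.aestronglyMeasurable
      fun_prop
    · filter_upwards [eventually_ge_atTop (1:ℝ)] with a ha
      rw [ae_restrict_iff' measurableSet_Ioi]
      filter_upwards with t ht
      simp only [mem_Ioi] at ht
      have hca : 1 ≤ Real.cosh a := Real.one_le_cosh a
      have hca1 : Real.cosh 1 ≤ Real.cosh a := by
        rw [Real.cosh_le_cosh]
        rw [abs_of_nonneg (by norm_num : (0:ℝ) ≤ 1), abs_of_nonneg (by linarith : (0:ℝ) ≤ a)]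
        exact ha
      have ht0 : 0 < t := lt_trans one_pos ht
      have hu0 : 0 < t ^ m - 1 := by
        have := one_lt_pow₀ ht hm0; linarith
      have hA0 : 0 ≤ (t ^ m - 1) ^ (-(1:ℝ)/2) := Real.rpow_nonneg hu0.le _
      have hcosh2 : 0 < Real.cosh a ^ 2 * t ^ 2 - 1 := by
        have h1 : (1:ℝ) ≤ Real.cosh a ^ 2 := by nlinarith
        have h2 : (1:ℝ) < t ^ 2 := by nlinarith
        nlinarith
      have hFnn : 0 ≤ F a t := by
        apply mul_nonneg (by positivity)
        exact mul_nonneg hA0 (Real.rpow_nonneg hcosh2.le _)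
      rw [Real.norm_eq_abs, abs_of_nonneg hFnn]
      have hrw : F a t = (t ^ m - 1) ^ (-(1:ℝ)/2) *
          (t ^ 2 - ((Real.cosh a)⁻¹) ^ 2) ^ (-(1:ℝ)/2) := by
        rw [hF]
        have := key_identity (Real.cosh a) t hca ht
        calc Real.cosh a * ((t ^ m - 1) ^ (-(1:ℝ)/2) *
              (Real.cosh a ^ 2 * t ^ 2 - 1) ^ (-(1:ℝ)/2))
            = (t ^ m - 1) ^ (-(1:ℝ)/2) *
              (Real.cosh a * (Real.cosh a ^ 2 * t ^ 2 - 1) ^ (-(1:ℝ)/2)) := by ring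
          _ = _ := by rw [this]
      rw [hrw]
      have hmono : (t ^ 2 - ((Real.cosh a)⁻¹) ^ 2) ^ (-(1:ℝ)/2) ≤ K * (t ^ 2) ^ (-(1:ℝ)/2) := by
        have hle : (1 - (Real.cosh 1)⁻¹ ^ 2) * t ^ 2 ≤ t ^ 2 - ((Real.cosh a)⁻¹) ^ 2 := by
          have h1 : (Real.cosh a)⁻¹ ≤ (Real.cosh 1)⁻¹ := by
            apply inv_anti₀ (by linarith) hca1
          have h2 : 0 < (Real.cosh a)⁻¹ := inv_pos.mpr (by linarith)
          have h3 : ((Real.cosh a)⁻¹)^2 ≤ ((Real.cosh 1)⁻¹)^2 := by nlinarith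
          have h4 : (1:ℝ) ≤ t ^ 2 := by nlinarith
          have h5 : ((Real.cosh 1)⁻¹)^2 * 1 ≤ ((Real.cosh 1)⁻¹)^2 * t ^ 2 :=
            mul_le_mul_of_nonneg_left h4 (sq_nonneg _)
          have h6 : (1 - (Real.cosh 1)⁻¹ ^ 2) * t ^ 2 = t ^ 2 - (Real.cosh 1)⁻¹ ^ 2 * t ^ 2 := by
            ring
          rw [h6]
          rw [mul_one] at h5
          linarith
        have hpos : 0 < (1 - (Real.cosh 1)⁻¹ ^ 2) * t ^ 2 := by positivity
        calc (t ^ 2 - ((Real.cosh a)⁻¹) ^ 2) ^ (-(1:ℝ)/2)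
            ≤ ((1 - (Real.cosh 1)⁻¹ ^ 2) * t ^ 2) ^ (-(1:ℝ)/2) :=
              Real.rpow_le_rpow_of_nonpos hpos hle (by norm_num)
          _ = K * (t ^ 2) ^ (-(1:ℝ)/2) := by
              rw [Real.mul_rpow hKbase.le (sq_nonneg t)]
      calc (t ^ m - 1) ^ (-(1:ℝ)/2) * (t ^ 2 - ((Real.cosh a)⁻¹) ^ 2) ^ (-(1:ℝ)/2)
          ≤ (t ^ m - 1) ^ (-(1:ℝ)/2) * (K * (t ^ 2) ^ (-(1:ℝ)/2)) :=
            mul_le_mul_of_nonneg_left hmono hA0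
        _ = K * fLim n t := by rw [fLim, ← hm]; ring
    · exact (integrable_fLim n hn).const_mul K
    · rw [ae_restrict_iff' measurableSet_Ioi]
      filter_upwards with t ht
      simp only [mem_Ioi] at ht
      have ht0 : 0 < t := lt_trans one_pos ht
      have hFeq : ∀ a : ℝ, F a t = (t ^ m - 1) ^ (-(1:ℝ)/2) *
          (t ^ 2 - ((Real.cosh a)⁻¹) ^ 2) ^ (-(1:ℝ)/2) := by
        intro a
        rw [hF]
        have := key_identity (Real.cosh a) t (Real.one_le_cosh a) ht
        calc Real.cosh a * ((t ^ m - 1) ^ (-(1:ℝ)/2) *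
              (Real.cosh a ^ 2 * t ^ 2 - 1) ^ (-(1:ℝ)/2))
            = (t ^ m - 1) ^ (-(1:ℝ)/2) *
              (Real.cosh a * (Real.cosh a ^ 2 * t ^ 2 - 1) ^ (-(1:ℝ)/2)) := by ring
          _ = _ := by rw [this]
      simp only [hFeq]
      have h0 : Tendsto (fun a : ℝ => ((Real.cosh a)⁻¹) ^ 2) atTop (𝓝 0) := by
        have := tendsto_cosh_atTop'.inv_tendsto_atTop
        simpa using this.pow 2
      have hsub : Tendsto (fun a : ℝ => t ^ 2 - ((Real.cosh a)⁻¹) ^ 2) atTop (𝓝 (t ^ 2)) := by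
        simpa using (tendsto_const_nhds.sub h0)
      have hrpow : Tendsto (fun a : ℝ => (t ^ 2 - ((Real.cosh a)⁻¹) ^ 2) ^ (-(1:ℝ)/2)) atTop
          (𝓝 ((t ^ 2) ^ (-(1:ℝ)/2))) := by
        exact (Real.continuousAt_rpow_const _ _ (Or.inl (by positivity))).tendsto.comp hsub
      simpa [fLim, ← hm] using hrpow.const_mul ((t ^ m - 1) ^ (-(1:ℝ)/2))
  rw [integral_fLim n hn] at hDCT
  have hfinal := hDCT.const_mul (2 : ℝ)
  have : (2 : ℝ) * (π / 2 / ((n : ℝ) - 1)) = π / ((n : ℝ) - 1) := by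
    field_simp
  rw [this] at hfinal
  simp only [← hSa] at hfinal
  exact hfinal
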